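/- Let b ≥ 2 be an integer and k = ⌊b/2⌋. Let α be any type, u : α × α → ℝ a symmetric function (u(x,y) = u(y,x) for all x, y), and z₁,…,z_b ∈ α. Then binom(b,2)⁻¹ Σ_{1≤i<j≤b} u(z_i, z_j) = (1/k)·(1/b!)·Σ_{π ∈ S_b} Σ_{s=1}^{k} u(z_{π(2s−1)}, z_{π(2s)}), where S_b denotes the set of all permutations of {1,…,b}. Moreover, for each unordered pair {i,j} ⊆ {1,…,b} with i ≠ j, the number of pairs (π, s) with π ∈ S_b and 1 ≤ s ≤ k such that {π(2s−1), π(2s)} = {i,j} equals 2k(b−2)!. -/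

import Mathlib

open Finset Equiv

lemma L1 (m : ℕ) (t : Fin (m+1)) :
    (Finset.univ.filter fun σ : Equiv.Perm (Fin (m+1)) => σ 0 = t).card = m.factorial := by
  have h : m.factorial = (Finset.univ : Finset (Equiv.Perm (Fin m))).card := by
    simp [Finset.card_univ, Fintype.card_perm]
  rw [h]
  apply Finset.card_bij' (fun σ _ => (Equiv.Perm.decomposeFin σ).2)
    (fun e _ => Equiv.Perm.decomposeFin.symm (t, e))
  · intros; exact Finset.mem_univ _
  · intro e _; simp
  · intro σ hσ
    rcases Equiv.Perm.decomposeFin.symm.surjective σ with ⟨⟨p, e⟩, rfl⟩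
    simp_all
  · intro e _; simp

lemma L1' (m : ℕ) (c t : Fin (m+1)) :
    (Finset.univ.filter fun σ : Equiv.Perm (Fin (m+1)) => σ c = t).card = m.factorial := by
  rw [← L1 m t]
  apply Finset.card_bij' (fun σ _ => σ * Equiv.swap 0 c) (fun σ _ => σ * Equiv.swap 0 c)
  · intro σ hσ; simp_all [Equiv.Perm.mul_apply]
  · intro σ hσ; simp_all [Equiv.Perm.mul_apply]
  · intro σ _; simp [mul_assoc]
  · intro σ _; simp [mul_assoc]

lemma L2 (n : ℕ) (x y : Fin (n+2)) (hxy : x ≠ y) :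
    (Finset.univ.filter fun σ : Equiv.Perm (Fin (n+2)) => σ 0 = x ∧ σ 1 = y).card
      = n.factorial := by
  have hw : Equiv.swap 0 x y ≠ 0 := by
    intro h
    exact hxy (Eq.symm (by simpa using ((Equiv.swap 0 x).injective
      (a₁ := y) (a₂ := x) (by rw [h, Equiv.swap_apply_right]))))
  rw [← L1' n 0 ((Equiv.swap 0 x y).pred hw)]
  apply Finset.card_bij' (fun σ _ => (Equiv.Perm.decomposeFin σ).2)
    (fun e _ => Equiv.Perm.decomposeFin.symm (x, e))
  · intro σ hσ
    rcases Equiv.Perm.decomposeFin.symm.surjective σ with ⟨⟨p, e⟩, rfl⟩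
    simp only [Finset.mem_filter, Finset.mem_univ, true_and,
      Equiv.Perm.decomposeFin_symm_apply_zero, Equiv.Perm.decomposeFin_symm_apply_one,
      Equiv.apply_symm_apply] at hσ ⊢
    obtain ⟨hp, h1⟩ := hσ
    subst hp
    have h2 : (e 0).succ = Equiv.swap 0 p y := by rw [← h1, Equiv.swap_apply_self]
    exact Fin.succ_injective _ (by rw [h2, Fin.succ_pred])
  · intro e he
    simp only [Finset.mem_filter, Finset.mem_univ, true_and] at he ⊢
    refine ⟨by simp, ?_⟩
    rw [Equiv.Perm.decomposeFin_symm_apply_one, he, Fin.succ_pred, Equiv.swap_apply_self]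
  · intro σ hσ
    rcases Equiv.Perm.decomposeFin.symm.surjective σ with ⟨⟨p, e⟩, rfl⟩
    simp only [Finset.mem_filter, Finset.mem_univ, true_and,
      Equiv.Perm.decomposeFin_symm_apply_zero, Equiv.apply_symm_apply] at hσ ⊢
    rw [hσ.1]
  · intro e _; simp

lemma L3 (n : ℕ) (a0 a1 x y : Fin (n+2)) (ha : a0 ≠ a1) (hxy : x ≠ y) :
    (Finset.univ.filter fun π : Equiv.Perm (Fin (n+2)) => π a0 = x ∧ π a1 = y).card
      = n.factorial := by
  have hc1' : Equiv.swap 0 a0 a1 ≠ 0 := by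
    intro h
    exact ha (Eq.symm (by simpa using ((Equiv.swap 0 a0).injective
      (a₁ := a1) (a₂ := a0) (by rw [h, Equiv.swap_apply_right]))))
  set τ : Equiv.Perm (Fin (n+2)) := Equiv.swap 0 a0 * Equiv.swap 1 (Equiv.swap 0 a0 a1) with hτ
  have hτ0 : τ 0 = a0 := by
    rw [hτ, Equiv.Perm.mul_apply, Equiv.swap_apply_of_ne_of_ne (by norm_num) (Ne.symm hc1'),
      Equiv.swap_apply_left]
  have hτ1 : τ 1 = a1 := by
    rw [hτ, Equiv.Perm.mul_apply, Equiv.swap_apply_left, Equiv.swap_apply_self]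
  rw [← L2 n x y hxy]
  apply Finset.card_bij' (fun π _ => π * τ) (fun ρ _ => ρ * τ⁻¹)
  · intro π hπ
    simp only [Finset.mem_filter, Finset.mem_univ, true_and, Equiv.Perm.mul_apply,
      hτ0, hτ1] at hπ ⊢
    exact hπ
  · intro ρ hρ
    simp only [Finset.mem_filter, Finset.mem_univ, true_and, Equiv.Perm.mul_apply] at hρ ⊢
    rw [show τ⁻¹ a0 = 0 from by rw [← hτ0]; simp, show τ⁻¹ a1 = 1 from by rw [← hτ1]; simp]
    exact hρ
  · intro π _; simp [mul_assoc]
  · intro ρ _; simp [mul_assoc]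

lemma L4 (n : ℕ) (a0 a1 x y : Fin (n+2)) (ha : a0 ≠ a1) (hxy : x ≠ y) :
    (Finset.univ.filter fun π : Equiv.Perm (Fin (n+2)) =>
        (π a0 = x ∧ π a1 = y) ∨ (π a0 = y ∧ π a1 = x)).card
      = 2 * n.factorial := by
  rw [Finset.filter_or, Finset.card_union_of_disjoint, L3 n a0 a1 x y ha hxy,
    L3 n a0 a1 y x ha (Ne.symm hxy)]
  · ring
  · rw [Finset.disjoint_filter]
    rintro π _ ⟨h1, h2⟩ ⟨h3, h4⟩
    exact hxy (h1 ▸ h3 ▸ rfl)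

lemma L5 (n : ℕ) (a0 a1 : Fin (n+2)) (ha : a0 ≠ a1) (f : Fin (n+2) → Fin (n+2) → ℝ) :
    ∑ π : Equiv.Perm (Fin (n+2)), f (π a0) (π a1)
      = n.factorial * ∑ x : Fin (n+2), ∑ y : Fin (n+2), if x = y then 0 else f x y := by
  rw [← Finset.sum_fiberwise_of_maps_to (g := fun π : Equiv.Perm (Fin (n+2)) => (π a0, π a1))
      (t := Finset.univ ×ˢ Finset.univ) (fun _ _ => by simp) (fun π => f (π a0) (π a1))]
  rw [Finset.sum_product, Finset.mul_sum]
  refine Finset.sum_congr rfl fun x _ => ?_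
  rw [Finset.mul_sum]
  refine Finset.sum_congr rfl fun y _ => ?_
  rcases eq_or_ne x y with rfl | hxy
  · rw [if_pos rfl, mul_zero]
    convert Finset.sum_empty
    ext π
    simp only [Finset.mem_filter, Prod.mk.injEq, Finset.mem_univ, true_and,
      Finset.notMem_empty, iff_false]
    rintro ⟨h1, h2⟩
    exact ha (π.injective (h1.trans h2.symm))
  · rw [if_neg hxy]
    have hcong : ∀ π ∈ Finset.univ.filter
        (fun π : Equiv.Perm (Fin (n+2)) => (π a0, π a1) = (x, y)),
        f (π a0) (π a1) = f x y := by
      intro π hπ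
      simp only [Finset.mem_filter, Prod.mk.injEq] at hπ
      rw [hπ.2.1, hπ.2.2]
    rw [Finset.sum_congr rfl hcong, Finset.sum_const, nsmul_eq_mul]
    congr 1
    norm_cast
    rw [← L3 n a0 a1 x y ha hxy]
    congr 1
    apply Finset.filter_congr
    intro π _
    simp [Prod.ext_iff]

lemma L6 (a b c d : ℕ) :
    ({a,b} : Finset ℕ) = {c,d} ↔ (a = c ∧ b = d) ∨ (a = d ∧ b = c) := by
  constructor
  · intro h
    have ha : a ∈ ({c,d} : Finset ℕ) := h ▸ (by simp)
    have hb : b ∈ ({c,d} : Finset ℕ) := h ▸ (by simp)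
    have hc : c ∈ ({a,b} : Finset ℕ) := h ▸ (by simp)
    have hd : d ∈ ({a,b} : Finset ℕ) := h ▸ (by simp)
    simp only [Finset.mem_insert, Finset.mem_singleton] at ha hb hc hd
    omega
  · rintro (⟨rfl, rfl⟩ | ⟨rfl, rfl⟩)
    · rfl
    · exact Finset.pair_comm a b

/-- Extension of a permutation of `Fin b` to `ℕ` (fixing indices `≥ b`). -/
def permExt {b : ℕ} (π : Equiv.Perm (Fin b)) (i : ℕ) : ℕ :=
  if h : i < b then ((π ⟨i, h⟩ : Fin b) : ℕ) else i

/-- For a symmetric function `u` and points `z_0,…,z_{b−1}` (zero-based),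
with `k = ⌊b/2⌋`:
`binom(b,2)⁻¹ Σ_{i<j} u(z_i,z_j) = (1/k)·(1/b!)·Σ_{π ∈ S_b} Σ_{s<k} u(z_{π(2s)}, z_{π(2s+1)})`,
and for each unordered pair `{i,j}` with `i ≠ j`, the number of pairs `(π, s)` with
`{π(2s), π(2s+1)} = {i,j}` equals `2k(b−2)!`. -/
theorem statement16 {α : Type*} (b : ℕ) (hb : 2 ≤ b) (k : ℕ) (hk : k = b / 2)
    (u : α → α → ℝ) (hsymm : ∀ x y, u x y = u y x) (z : ℕ → α) :
    (((b.choose 2 : ℕ) : ℝ)⁻¹ *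
        ∑ i ∈ Finset.range b, ∑ j ∈ Finset.range b,
          (if i < j then u (z i) (z j) else 0)
      = (1 / (k : ℝ)) * (1 / (b.factorial : ℝ)) *
          ∑ π : Equiv.Perm (Fin b), ∑ s ∈ Finset.range k,
            u (z (permExt π (2 * s))) (z (permExt π (2 * s + 1)))) ∧
    (∀ i j : ℕ, i < b → j < b → i ≠ j →
      (((Finset.univ : Finset (Equiv.Perm (Fin b))) ×ˢ Finset.range k).filter
          (fun p : Equiv.Perm (Fin b) × ℕ =>
            ({permExt p.1 (2 * p.2), permExt p.1 (2 * p.2 + 1)} : Finset ℕ)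
              = ({i, j} : Finset ℕ))).card
        = 2 * k * (b - 2).factorial) := by
  obtain ⟨n, rfl⟩ : ∃ n, b = n + 2 := ⟨b - 2, by omega⟩
  have hk1 : 1 ≤ k := by omega
  constructor
  · -- the sum identity
    set S : ℝ := ∑ i ∈ Finset.range (n+2), ∑ j ∈ Finset.range (n+2),
      (if i < j then u (z i) (z j) else 0) with hS
    have hD : (∑ x : Fin (n+2), ∑ y : Fin (n+2),
        if x = y then (0:ℝ) else u (z ↑x) (z ↑y)) = S + S := by
      have e1 : ∀ x : Fin (n+2),
          (∑ y : Fin (n+2), if x = y then (0:ℝ) else u (z ↑x) (z ↑y))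
          = ∑ j ∈ Finset.range (n+2), if (x:ℕ) = j then 0 else u (z ↑x) (z j) := by
        intro x
        rw [← Fin.sum_univ_eq_sum_range
          (fun j => if (x:ℕ) = j then (0:ℝ) else u (z ↑x) (z j)) (n+2)]
        exact Finset.sum_congr rfl fun y _ => by simp [Fin.ext_iff]
      rw [Finset.sum_congr rfl (fun x _ => e1 x),
        Fin.sum_univ_eq_sum_range
          (fun i => ∑ j ∈ Finset.range (n+2), if i = j then (0:ℝ) else u (z i) (z j)) (n+2)]
      have split : ∀ i j : ℕ, (if i = j then (0:ℝ) else u (z i) (z j))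
          = (if i < j then u (z i) (z j) else 0) + (if j < i then u (z i) (z j) else 0) := by
        intro i j
        rcases lt_trichotomy i j with h | h | h
        · rw [if_neg (by omega), if_pos h, if_neg (by omega), add_zero]
        · simp [h]
        · rw [if_neg (by omega), if_neg (by omega), if_pos h, zero_add]
      simp_rw [split]
      simp_rw [Finset.sum_add_distrib]
      congr 1
      rw [Finset.sum_comm, hS]
      refine Finset.sum_congr rfl fun j _ => Finset.sum_congr rfl fun i _ => ?_
      split
      · rw [hsymm]
      · rfl
    have hT : (∑ π : Equiv.Perm (Fin (n+2)), ∑ s ∈ Finset.range k,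
        u (z (permExt π (2 * s))) (z (permExt π (2 * s + 1))))
        = (k : ℝ) * ((n.factorial : ℝ) * (S + S)) := by
      rw [Finset.sum_comm]
      have hstep : ∀ s ∈ Finset.range k,
          (∑ π : Equiv.Perm (Fin (n+2)),
            u (z (permExt π (2 * s))) (z (permExt π (2 * s + 1))))
          = (n.factorial : ℝ) * (S + S) := by
        intro s hs
        rw [Finset.mem_range] at hs
        have h2s : 2 * s + 1 < n + 2 := by omega
        have h2s' : 2 * s < n + 2 := by omega
        have ha : (⟨2*s, h2s'⟩ : Fin (n+2)) ≠ ⟨2*s+1, h2s⟩ := by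
          simp [Fin.ext_iff]
        have hperm : ∀ π : Equiv.Perm (Fin (n+2)),
            u (z (permExt π (2 * s))) (z (permExt π (2 * s + 1)))
            = u (z ↑(π ⟨2*s, h2s'⟩)) (z ↑(π ⟨2*s+1, h2s⟩)) := by
          intro π
          rw [permExt, permExt, dif_pos h2s', dif_pos h2s]
        rw [Finset.sum_congr rfl (fun π _ => hperm π),
          L5 n _ _ ha (fun x y => u (z ↑x) (z ↑y)), hD]
      rw [Finset.sum_congr rfl hstep, Finset.sum_const, Finset.card_range, nsmul_eq_mul]
    rw [hT]
    have hid : (((n+2).choose 2 : ℕ) : ℝ) * 2 * (n.factorial : ℝ)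
        = ((n+2).factorial : ℝ) := by
      have h := Nat.choose_mul_factorial_mul_factorial (n := n+2) (k := 2) (by omega)
      have h2 : (2 : ℕ).factorial = 2 := rfl
      have h3 : n + 2 - 2 = n := by omega
      rw [h2, h3] at h
      exact_mod_cast h
    have hC : (((n+2).choose 2 : ℕ) : ℝ) ≠ 0 := by
      have := Nat.choose_pos (n := n+2) (k := 2) (by omega)
      positivity
    have hk0 : (k : ℝ) ≠ 0 := by positivity
    have hb0 : (((n+2).factorial : ℕ) : ℝ) ≠ 0 := by positivity
    field_simp
    linear_combination (-S) * hid
  · -- the counting claim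
    intro i j hi hj hij
    rw [Finset.card_eq_sum_card_fiberwise (f := Prod.snd) (t := Finset.range k)
      (fun p hp => (Finset.mem_product.mp (Finset.mem_filter.mp hp).1).2)]
    have hstep : ∀ s ∈ Finset.range k,
        ((((Finset.univ : Finset (Equiv.Perm (Fin (n+2)))) ×ˢ Finset.range k).filter
          (fun p : Equiv.Perm (Fin (n+2)) × ℕ =>
            ({permExt p.1 (2 * p.2), permExt p.1 (2 * p.2 + 1)} : Finset ℕ)
              = ({i, j} : Finset ℕ))).filter (fun p => p.2 = s)).card
        = 2 * n.factorial := by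
      intro s hs
      rw [Finset.mem_range] at hs
      have h2s : 2 * s + 1 < n + 2 := by omega
      have h2s' : 2 * s < n + 2 := by omega
      have ha : (⟨2*s, h2s'⟩ : Fin (n+2)) ≠ ⟨2*s+1, h2s⟩ := by simp [Fin.ext_iff]
      have hxy : (⟨i, hi⟩ : Fin (n+2)) ≠ ⟨j, hj⟩ := by simp [Fin.ext_iff]; omega
      rw [← L4 n ⟨2*s, h2s'⟩ ⟨2*s+1, h2s⟩ ⟨i, hi⟩ ⟨j, hj⟩ ha hxy]
      have hPQ : ∀ π : Equiv.Perm (Fin (n+2)),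
          (({permExt π (2 * s), permExt π (2 * s + 1)} : Finset ℕ) = ({i, j} : Finset ℕ))
          ↔ ((π ⟨2*s, h2s'⟩ = ⟨i, hi⟩ ∧ π ⟨2*s+1, h2s⟩ = ⟨j, hj⟩)
            ∨ (π ⟨2*s, h2s'⟩ = ⟨j, hj⟩ ∧ π ⟨2*s+1, h2s⟩ = ⟨i, hi⟩)) := by
        intro π
        rw [show permExt π (2*s) = ((π ⟨2*s, h2s'⟩ : Fin (n+2)) : ℕ) from by
            rw [permExt, dif_pos h2s'],
          show permExt π (2*s+1) = ((π ⟨2*s+1, h2s⟩ : Fin (n+2)) : ℕ) from by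
            rw [permExt, dif_pos h2s],
          L6]
        simp [Fin.ext_iff]
      refine Finset.card_bij' (fun p _ => p.1) (fun π _ => (π, s)) ?c1 ?c2 ?c3 ?c4
      case c1 =>
        rintro ⟨π', s'⟩ hp
        simp only [Finset.mem_filter, Finset.mem_product, Finset.mem_univ, true_and,
          Finset.mem_range] at hp ⊢
        obtain ⟨⟨_, hP⟩, rfl⟩ := hp
        exact (hPQ π').mp hP
      case c2 =>
        intro π hπ
        simp only [Finset.mem_filter, Finset.mem_product, Finset.mem_univ, true_and,
          Finset.mem_range] at hπ ⊢
        exact ⟨⟨hs, (hPQ π).mpr hπ⟩, trivial⟩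
      case c3 =>
        rintro ⟨π', s'⟩ hp
        simp only [Finset.mem_filter] at hp
        simp only [Prod.mk.injEq]
        exact ⟨trivial, hp.2.symm⟩
      case c4 =>
        intro π _
        rfl
    rw [Finset.sum_congr rfl hstep, Finset.sum_const, Finset.card_range, smul_eq_mul,
      show n + 2 - 2 = n from by omega]
    ring
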